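/- Fix a>0. There exists a constant c>0, depending only on a and the doubling constant c_d (and independent of A and τ), such that for every compact set A ⊂ ℝ^N and every τ∈(T₁,T₂), one has |A| ≤ c·C_a(A×{τ}). (Indeed, the Lebesgue measure on the time slice A×{τ} satisfies ∫ G_a(z,ζ)dν(ζ) ≤ β for all z∈S for a constant β=β(a,c_d), so ν/β is admissible for the capacity.) -/

import Mathlib

open MeasureTheory Set
open scoped ENNReal NNReal

noncomputable section

/-- ℝ^N with Euclidean structure and Lebesgue measure. -/
abbrev Vec (N : ℕ) := EuclideanSpace ℝ (Fin N)

/-- The `d`-ball `B(x,r) = {y : d(x,y) < r}`. -/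
def dBall {N : ℕ} (d : Vec N → Vec N → ℝ) (x : Vec N) (r : ℝ) : Set (Vec N) :=
  {y | d x y < r}

/-- Lebesgue measure is doubling with respect to `d`, with doubling constant `cd`. -/
def Doubling {N : ℕ} (d : Vec N → Vec N → ℝ) (cd : ℝ) : Prop :=
  ∀ (x : Vec N) (r : ℝ), 0 < r →
    volume (dBall d x (2 * r)) ≤ ENNReal.ofReal cd * volume (dBall d x r)

/-- `d` is a metric on ℝ^N inducing the Euclidean topology (with bounded `d`-balls,
as in assumption (D1) of the paper). -/
structure GoodMetric {N : ℕ} (d : Vec N → Vec N → ℝ) : Prop where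
  nonneg : ∀ x y, 0 ≤ d x y
  eq_zero_iff : ∀ x y, d x y = 0 ↔ x = y
  symm : ∀ x y, d x y = d y x
  triangle : ∀ x y z, d x z ≤ d x y + d y z
  cont : Continuous fun p : Vec N × Vec N => d p.1 p.2
  finer : ∀ (x : Vec N) (ε : ℝ), 0 < ε → ∃ δ > 0, ∀ y, d x y < δ → dist x y < ε
  bounded : ∀ (x : Vec N) (r : ℝ), Bornology.IsBounded (dBall d x r)

/-- The strip `S = ℝ^N × (T₁,T₂)`. -/
def strip (N : ℕ) (T₁ T₂ : EReal) : Set (Vec N × ℝ) :=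
  {z | T₁ < (z.2 : EReal) ∧ (z.2 : EReal) < T₂}

/-- The `d`-Gaussian kernel of exponent `a`. -/
def gaussK {N : ℕ} (d : Vec N → Vec N → ℝ) (a : ℝ) (z ζ : Vec N × ℝ) : ℝ≥0∞ :=
  if ζ.2 < z.2 then
    (volume (dBall d z.1 (Real.sqrt (z.2 - ζ.2))))⁻¹ *
      ENNReal.ofReal (Real.exp (-a * d z.1 ζ.1 ^ 2 / (z.2 - ζ.2)))
  else 0

/-- Capacity of `F` with respect to the kernel `K`: supremum of total masses of
nonnegative Radon measures supported in `F` whose `K`-potential is `≤ 1` on `X`. -/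
def capac {α : Type*} [TopologicalSpace α] [MeasurableSpace α]
    (X : Set α) (K : α → α → ℝ≥0∞) (F : Set α) : ℝ≥0∞ :=
  ⨆ (μ : Measure α) (_ : μ.InnerRegular ∧ IsLocallyFiniteMeasure μ ∧ μ Fᶜ = 0 ∧
      ∀ z ∈ X, ∫⁻ ζ, K z ζ ∂μ ≤ 1), μ F

/-- The parabolic counterpart `d̂` of `d`. -/
def pdist {N : ℕ} (d : Vec N → Vec N → ℝ) (z ζ : Vec N × ℝ) : ℝ :=
  (d z.1 ζ.1 ^ 4 + (z.2 - ζ.2) ^ 2) ^ (1 / 4 : ℝ)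

/-- The parabolic ball `B̂(z,r)` (as a subset of ℝ^{N+1}). -/
def pBall {N : ℕ} (d : Vec N → Vec N → ℝ) (z : Vec N × ℝ) (r : ℝ) : Set (Vec N × ℝ) :=
  {ζ | pdist d z ζ < r}

/-- The ring-shaped set `Ω_k^h(z₀,λ)`. -/
def ringSet {N : ℕ} (d : Vec N → Vec N → ℝ) (S Ω : Set (Vec N × ℝ)) (z₀ : Vec N × ℝ)
    (lam : ℝ) (k h : ℤ) : Set (Vec N × ℝ) :=
  {ζ ∈ S \ Ω | lam ^ (k + 1) ≤ z₀.2 - ζ.2 ∧ z₀.2 - ζ.2 ≤ lam ^ k ∧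
    (1 / lam) ^ (h - 1) ≤ Real.exp (d z₀.1 ζ.1 ^ 2 / (z₀.2 - ζ.2)) ∧
    Real.exp (d z₀.1 ζ.1 ^ 2 / (z₀.2 - ζ.2)) ≤ (1 / lam) ^ h ∧
    pdist d z₀ ζ ≤ Real.sqrt lam}

/-- The set `D_k^h(z₀,λ)`. -/
def DSet {N : ℕ} (d : Vec N → Vec N → ℝ) (S Ω : Set (Vec N × ℝ)) (z₀ : Vec N × ℝ)
    (lam : ℝ) (k h : ℤ) : Set (Vec N × ℝ) :=
  {ζ ∈ S \ Ω | lam ^ (k + 1) ≤ z₀.2 - ζ.2 ∧ z₀.2 - ζ.2 ≤ lam ^ k ∧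
    Real.exp (d z₀.1 ζ.1 ^ 2 / (z₀.2 - ζ.2)) ≤ (1 / lam) ^ h ∧
    pdist d z₀ ζ ≤ Real.sqrt lam}

/-- The Wiener-type series `z_a^b(λ;s)`. -/
def zSeries {N : ℕ} (d : Vec N → Vec N → ℝ) (S Ω : Set (Vec N × ℝ)) (z₀ : Vec N × ℝ)
    (a b lam s : ℝ) : ℝ≥0∞ :=
  ∑' k : ℕ, ∑' h : ℕ,
    if 1 ≤ k ∧ (k : ℝ) ≤ s ∧ 1 ≤ h then
      ENNReal.ofReal (lam ^ (b * (h : ℝ))) *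
        capac S (gaussK d a) (DSet d S Ω z₀ lam (k : ℤ) (h : ℤ)) /
        volume (dBall d z₀.1 (lam ^ ((k : ℝ) / 2)))
    else 0

/-- The section `E_λ(ρ,τ)`. -/
def Eset {N : ℕ} (d : Vec N → Vec N → ℝ) (S Ω : Set (Vec N × ℝ)) (z₀ : Vec N × ℝ)
    (lam ρ τ : ℝ) : Set (Vec N) :=
  {x | (x, τ) ∈ S \ Ω ∧ pdist d z₀ (x, τ) ≤ Real.sqrt lam ∧
    Real.exp (d z₀.1 x ^ 2 / (z₀.2 - τ)) ≤ ρ}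

end
open Filter in
private lemma sumAux (a cd : ℝ) (ha : 0 < a) (hcd : 1 < cd) :
    Summable (fun j : ℕ => cd ^ (j + 1) * Real.exp (-a * 4 ^ j)) := by
  apply summable_of_ratio_norm_eventually_le (r := 1/2) (by norm_num)
  have h4 : Tendsto (fun j : ℕ => (4 : ℝ) ^ j) atTop atTop :=
    tendsto_pow_atTop_atTop_of_one_lt (by norm_num)
  have h3 : Tendsto (fun j : ℕ => -(3 * a * 4 ^ j)) atTop atBot := by
    apply Filter.tendsto_neg_atBot_iff.2
    exact Tendsto.const_mul_atTop (by positivity) h4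
  have h0 : Tendsto (fun j : ℕ => cd * Real.exp (-(3 * a * 4 ^ j))) atTop (nhds (cd * 0)) :=
    Tendsto.const_mul _ (Real.tendsto_exp_atBot.comp h3)
  rw [mul_zero] at h0
  filter_upwards [h0.eventually_lt_const (by norm_num : (0:ℝ) < 1/2)] with j hj
  have hfpos : ∀ i : ℕ, 0 < cd ^ (i + 1) * Real.exp (-a * 4 ^ i) := fun i => by positivity
  have key : cd ^ (j + 1 + 1) * Real.exp (-a * 4 ^ (j + 1)) =
      (cd * Real.exp (-(3 * a * 4 ^ j))) * (cd ^ (j + 1) * Real.exp (-a * 4 ^ j)) := by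
    rw [pow_succ]
    rw [show (-a * 4 ^ (j + 1) : ℝ) = -(3 * a * 4 ^ j) + -a * 4 ^ j by ring, Real.exp_add]
    ring
  rw [Real.norm_eq_abs, Real.norm_eq_abs, abs_of_pos (hfpos _), abs_of_pos (hfpos _), key]
  exact mul_le_mul_of_nonneg_right hj.le (hfpos j).le

private lemma vol_dBall_pos {N : ℕ} {d : Vec N → Vec N → ℝ} (hd : GoodMetric d) (x : Vec N)
    {ρ : ℝ} (hρ : 0 < ρ) : 0 < volume (dBall d x ρ) := by
  have hopen : IsOpen (dBall d x ρ) :=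
    isOpen_lt (hd.cont.comp (continuous_const.prodMk continuous_id)) continuous_const
  exact hopen.measure_pos volume ⟨x, by simp [dBall, (hd.eq_zero_iff x x).2 rfl, hρ]⟩

private lemma pot_bound {N : ℕ} {d : Vec N → Vec N → ℝ} (hd : GoodMetric d)
    {a cd : ℝ} (ha : 0 < a) (hcd : 1 < cd) (hD : Doubling d cd)
    (x : Vec N) {s : ℝ} (hs : 0 < s) :
    ∫⁻ ξ, ENNReal.ofReal (Real.exp (-a * d x ξ ^ 2 / s)) ≤
      ENNReal.ofReal (1 + ∑' j : ℕ, cd ^ (j + 1) * Real.exp (-a * 4 ^ j)) *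
        volume (dBall d x (Real.sqrt s)) := by
  set r := Real.sqrt s with hrdef
  have hrpos : 0 < r := Real.sqrt_pos.2 hs
  have hr2 : r ^ 2 = s := Real.sq_sqrt hs.le
  set V := volume (dBall d x r) with hV
  have hopen : ∀ ρ : ℝ, IsOpen (dBall d x ρ) := fun ρ =>
    isOpen_lt (hd.cont.comp (continuous_const.prodMk continuous_id)) continuous_const
  set D : ℕ → Set (Vec N) := fun j =>
    match j with
    | 0 => dBall d x r
    | (i+1) => dBall d x (2 ^ (i+1) * r) \ dBall d x (2 ^ i * r) with hD'
  have hmeasD : ∀ j, MeasurableSet (D j) := by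
    intro j
    cases j with
    | zero => exact (hopen r).measurableSet
    | succ i => exact ((hopen _).measurableSet).diff ((hopen _).measurableSet)
  have hcover : (⋃ j, D j) = univ := by
    apply eq_univ_of_forall
    intro ξ
    obtain ⟨n, hn⟩ : ∃ n : ℕ, d x ξ < 2 ^ n * r := by
      obtain ⟨n, hn⟩ := pow_unbounded_of_one_lt (d x ξ / r) (by norm_num : (1:ℝ) < 2)
      exact ⟨n, by rwa [div_lt_iff₀ hrpos] at hn⟩
    have key : ∀ n : ℕ, ∀ y, y ∈ dBall d x (2 ^ n * r) → y ∈ ⋃ j, D j := by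
      intro n
      induction n with
      | zero => intro y hy; exact mem_iUnion.2 ⟨0, by show y ∈ dBall d x r; simpa [dBall] using hy⟩
      | succ i ih =>
        intro y hy
        by_cases hmem : y ∈ dBall d x (2 ^ i * r)
        · exact ih y hmem
        · exact mem_iUnion.2 ⟨i + 1, ⟨hy, hmem⟩⟩
    exact key n ξ hn
  have hiter : ∀ j : ℕ, volume (dBall d x (2 ^ j * r)) ≤ ENNReal.ofReal cd ^ j * V := by
    intro j
    induction j with
    | zero => simp [hV]
    | succ i ih =>
      have h2 : (2 : ℝ) ^ (i+1) * r = 2 * (2 ^ i * r) := by ring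
      rw [h2]
      calc volume (dBall d x (2 * (2 ^ i * r)))
          ≤ ENNReal.ofReal cd * volume (dBall d x (2 ^ i * r)) := hD x _ (by positivity)
        _ ≤ ENNReal.ofReal cd * (ENNReal.ofReal cd ^ i * V) := mul_le_mul_right ih _
        _ = ENNReal.ofReal cd ^ (i + 1) * V := by rw [pow_succ]; ring
  have hD0 : ∫⁻ ξ in D 0, ENNReal.ofReal (Real.exp (-a * d x ξ ^ 2 / s)) ≤ V := by
    calc ∫⁻ ξ in D 0, ENNReal.ofReal (Real.exp (-a * d x ξ ^ 2 / s))
        ≤ ∫⁻ _ in D 0, 1 := by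
          apply lintegral_mono
          intro ξ
          apply ENNReal.ofReal_le_one.2
          apply Real.exp_le_one_iff.2
          apply div_nonpos_of_nonpos_of_nonneg _ hs.le
          nlinarith [sq_nonneg (d x ξ)]
      _ = V := by rw [setLIntegral_one]
  have hDj : ∀ i : ℕ, ∫⁻ ξ in D (i+1), ENNReal.ofReal (Real.exp (-a * d x ξ ^ 2 / s)) ≤
      ENNReal.ofReal (cd ^ (i + 1) * Real.exp (-a * 4 ^ i)) * V := by
    intro i
    have hpt : ∀ ξ ∈ D (i+1), ENNReal.ofReal (Real.exp (-a * d x ξ ^ 2 / s)) ≤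
        ENNReal.ofReal (Real.exp (-a * 4 ^ i)) := by
      intro ξ hξ
      apply ENNReal.ofReal_le_ofReal
      apply Real.exp_le_exp.2
      have h1 : 2 ^ i * r ≤ d x ξ := not_lt.1 hξ.2
      have h2 : ((2:ℝ) ^ i * r) ^ 2 ≤ d x ξ ^ 2 :=
        pow_le_pow_left₀ (by positivity) h1 2
      have h3 : ((2:ℝ) ^ i * r) ^ 2 = 4 ^ i * s := by
        rw [mul_pow, hr2, ← pow_mul, mul_comm i 2, pow_mul]
        norm_num
      rw [div_le_iff₀ hs]
      nlinarith [h3 ▸ h2]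
    calc ∫⁻ ξ in D (i+1), ENNReal.ofReal (Real.exp (-a * d x ξ ^ 2 / s))
        ≤ ∫⁻ _ in D (i+1), ENNReal.ofReal (Real.exp (-a * 4 ^ i)) :=
          setLIntegral_mono' (hmeasD (i+1)) hpt
      _ = ENNReal.ofReal (Real.exp (-a * 4 ^ i)) * volume (D (i+1)) := setLIntegral_const _ _
      _ ≤ ENNReal.ofReal (Real.exp (-a * 4 ^ i)) * (ENNReal.ofReal cd ^ (i+1) * V) := by
          apply mul_le_mul_right
          exact (measure_mono diff_subset).trans (hiter (i+1))
      _ = ENNReal.ofReal (cd ^ (i + 1) * Real.exp (-a * 4 ^ i)) * V := by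
          rw [ENNReal.ofReal_mul (by positivity), ENNReal.ofReal_pow (by positivity)]
          ring
  have hsum := sumAux a cd ha hcd
  calc ∫⁻ ξ, ENNReal.ofReal (Real.exp (-a * d x ξ ^ 2 / s))
      = ∫⁻ ξ in ⋃ j, D j, ENNReal.ofReal (Real.exp (-a * d x ξ ^ 2 / s)) := by
        rw [hcover, Measure.restrict_univ]
    _ ≤ ∑' j, ∫⁻ ξ in D j, ENNReal.ofReal (Real.exp (-a * d x ξ ^ 2 / s)) :=
        lintegral_iUnion_le _ _
    _ ≤ V + ∑' i : ℕ, ENNReal.ofReal (cd ^ (i + 1) * Real.exp (-a * 4 ^ i)) * V := by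
        rw [tsum_eq_zero_add' ENNReal.summable]
        exact add_le_add hD0 (ENNReal.tsum_le_tsum hDj)
    _ = ENNReal.ofReal (1 + ∑' j : ℕ, cd ^ (j + 1) * Real.exp (-a * 4 ^ j)) * V := by
        rw [ENNReal.tsum_mul_right,
          ← ENNReal.ofReal_tsum_of_nonneg (fun i => by positivity) hsum,
          ENNReal.ofReal_add (by norm_num) (tsum_nonneg (fun i => by positivity)),
          add_mul, ENNReal.ofReal_one, one_mul]

/-- Lower bound of the Gaussian capacity of a time slice `A × {τ}` by the Lebesgue
measure of `A` (Proposition 2.6 (i) of the paper). -/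
theorem stmt2 (a cd : ℝ) (ha : 0 < a) (hcd : 1 < cd) :
    ∃ c : ℝ, 0 < c ∧
      ∀ (N : ℕ), 1 ≤ N → ∀ d : Vec N → Vec N → ℝ, GoodMetric d → Doubling d cd →
      ∀ T₁ T₂ : EReal, T₁ < T₂ →
      ∀ A : Set (Vec N), IsCompact A →
      ∀ τ : ℝ, T₁ < (τ : EReal) → (τ : EReal) < T₂ →
      volume A ≤ ENNReal.ofReal c *
        capac (strip N T₁ T₂) (gaussK d a) (A ×ˢ ({τ} : Set ℝ)) := by
  have htsum : 0 ≤ ∑' j : ℕ, cd ^ (j + 1) * Real.exp (-a * 4 ^ j) :=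
    tsum_nonneg (fun j => by positivity)
  refine ⟨1 + ∑' j : ℕ, cd ^ (j + 1) * Real.exp (-a * 4 ^ j), by linarith, ?_⟩
  intro N _hN d hd hD T₁ T₂ _hT A hA τ hτ1 hτ2
  set B : ℝ := 1 + ∑' j : ℕ, cd ^ (j + 1) * Real.exp (-a * 4 ^ j) with hBdef
  have hBpos : 0 < B := by linarith
  have hB0 : ENNReal.ofReal B ≠ 0 := (ENNReal.ofReal_pos.2 hBpos).ne'
  have hBtop : ENNReal.ofReal B ≠ ⊤ := ENNReal.ofReal_ne_top
  set f : Vec N → Vec N × ℝ := fun ξ => (ξ, τ) with hfdef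
  have hfc : Continuous f := continuous_id.prodMk continuous_const
  have hf : Measurable f := hfc.measurable
  have hAm : MeasurableSet A := hA.isClosed.measurableSet
  have hFm : MeasurableSet (A ×ˢ ({τ} : Set ℝ)) := hAm.prod (measurableSet_singleton τ)
  set ν : Measure (Vec N) := volume.restrict A with hν
  haveI hνfin : IsFiniteMeasure ν :=
    ⟨by rw [hν, Measure.restrict_apply_univ]; exact hA.measure_lt_top⟩
  have hνreg : ν.InnerRegular := inferInstance
  set μ : Measure (Vec N × ℝ) := Measure.map f ν with hμ
  haveI hμfin : IsFiniteMeasure μ := by rw [hμ]; exact Measure.isFiniteMeasure_map ν f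
  haveI hμreg : μ.InnerRegular := by
    constructor
    intro U hU rr hrr
    rw [hμ, Measure.map_apply hf hU] at hrr
    obtain ⟨K, hKU, hKc, hrK⟩ := hνreg.innerRegular (hf hU) rr hrr
    refine ⟨f '' K, image_subset_iff.2 hKU, hKc.image hfc, ?_⟩
    rw [hμ, Measure.map_apply hf ((hKc.image hfc).isClosed.measurableSet)]
    exact hrK.trans_le (measure_mono (subset_preimage_image f K))
  set μ' : Measure (Vec N × ℝ) := (ENNReal.ofReal B)⁻¹ • μ with hμ'
  haveI hμ'reg : μ'.InnerRegular := by rw [hμ']; infer_instance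
  haveI hμ'fin : IsFiniteMeasure μ' := by
    constructor
    rw [hμ', Measure.smul_apply, smul_eq_mul]
    exact ENNReal.mul_lt_top (ENNReal.inv_lt_top.2 (ENNReal.ofReal_pos.2 hBpos))
      (measure_lt_top μ univ)
  have hpot : ∀ z ∈ strip N T₁ T₂, ∫⁻ ζ, gaussK d a z ζ ∂μ ≤ ENNReal.ofReal B := by
    intro z _hz
    set g : Vec N × ℝ → ℝ≥0∞ := fun ζ => gaussK d a z (ζ.1, τ) with hg
    have hzero : μ {ζ : Vec N × ℝ | ζ.2 ≠ τ} = 0 := by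
      have hms : MeasurableSet {ζ : Vec N × ℝ | ζ.2 ≠ τ} :=
        ((measurableSet_singleton τ).preimage measurable_snd).compl
      rw [hμ, Measure.map_apply hf hms]
      have hemp : f ⁻¹' {ζ : Vec N × ℝ | ζ.2 ≠ τ} = ∅ := by ext ξ; simp [hfdef]
      rw [hemp]
      exact measure_empty
    have hae : (fun ζ => gaussK d a z ζ) =ᵐ[μ] g := by
      refine measure_mono_null ?_ hzero
      intro ζ hζ
      simp only [mem_compl_iff, mem_setOf_eq] at hζ ⊢
      intro h
      apply hζ
      have hid : (ζ.1, τ) = ζ := by rw [← h]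
      show gaussK d a z ζ = gaussK d a z (ζ.1, τ)
      rw [hid]
    rw [lintegral_congr_ae hae]
    have hgm : Measurable g := by
      by_cases h : τ < z.2
      · have hform : g = fun ζ : Vec N × ℝ => (volume (dBall d z.1 (Real.sqrt (z.2 - τ))))⁻¹ *
            ENNReal.ofReal (Real.exp (-a * d z.1 ζ.1 ^ 2 / (z.2 - τ))) := by
          funext ζ; simp [hg, gaussK, h]
        rw [hform]
        apply Measurable.const_mul
        apply ENNReal.measurable_ofReal.comp
        apply Continuous.measurable
        exact Real.continuous_exp.comp
          ((continuous_const.mul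
            ((hd.cont.comp (continuous_const.prodMk continuous_fst)).pow 2)).div_const _)
      · have hform : g = fun _ => 0 := by funext ζ; simp [hg, gaussK, h]
        rw [hform]; exact measurable_const
    rw [hμ, lintegral_map hgm hf]
    by_cases h : τ < z.2
    · have hs : 0 < z.2 - τ := sub_pos.2 h
      set Vz := volume (dBall d z.1 (Real.sqrt (z.2 - τ))) with hVz
      have hV0 : Vz ≠ 0 := (vol_dBall_pos hd z.1 (Real.sqrt_pos.2 hs)).ne'
      have hVtop : Vz ≠ ⊤ := ((hd.bounded z.1 _).measure_lt_top).ne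
      have hgf : ∀ ξ : Vec N, g (f ξ) =
          Vz⁻¹ * ENNReal.ofReal (Real.exp (-a * d z.1 ξ ^ 2 / (z.2 - τ))) := by
        intro ξ; simp [hg, hfdef, gaussK, h, hVz]
      calc ∫⁻ ξ, g (f ξ) ∂ν
          = ∫⁻ ξ in A, Vz⁻¹ *
              ENNReal.ofReal (Real.exp (-a * d z.1 ξ ^ 2 / (z.2 - τ))) ∂volume := by
            rw [hν]; exact lintegral_congr hgf
        _ ≤ ∫⁻ ξ, Vz⁻¹ *
              ENNReal.ofReal (Real.exp (-a * d z.1 ξ ^ 2 / (z.2 - τ))) ∂volume :=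
            setLIntegral_le_lintegral _ _
        _ = Vz⁻¹ * ∫⁻ ξ, ENNReal.ofReal (Real.exp (-a * d z.1 ξ ^ 2 / (z.2 - τ))) ∂volume :=
            lintegral_const_mul' _ _ (ENNReal.inv_ne_top.2 hV0)
        _ ≤ Vz⁻¹ * (ENNReal.ofReal B * Vz) :=
            mul_le_mul_right (pot_bound hd ha hcd hD z.1 hs) _
        _ = ENNReal.ofReal B := by
            rw [mul_comm (ENNReal.ofReal B), ← mul_assoc, ENNReal.inv_mul_cancel hV0 hVtop,
              one_mul]
    · have hgf : ∀ ξ : Vec N, g (f ξ) = 0 := fun ξ => by simp [hg, hfdef, gaussK, h]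
      rw [lintegral_congr hgf, lintegral_zero]
      exact zero_le
  have hcompl : μ' (A ×ˢ ({τ} : Set ℝ))ᶜ = 0 := by
    rw [hμ', Measure.smul_apply, hμ, Measure.map_apply hf hFm.compl]
    have hpre : f ⁻¹' (A ×ˢ ({τ} : Set ℝ))ᶜ = Aᶜ := by ext ξ; simp [hfdef]
    rw [hpre, hν, Measure.restrict_apply hAm.compl]
    simp
  have hpot' : ∀ z ∈ strip N T₁ T₂, ∫⁻ ζ, gaussK d a z ζ ∂μ' ≤ 1 := by
    intro z hz
    rw [hμ', lintegral_smul_measure]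
    calc (ENNReal.ofReal B)⁻¹ * ∫⁻ ζ, gaussK d a z ζ ∂μ
        ≤ (ENNReal.ofReal B)⁻¹ * ENNReal.ofReal B := mul_le_mul_right (hpot z hz) _
      _ = 1 := ENNReal.inv_mul_cancel hB0 hBtop
  have hle : μ' (A ×ˢ ({τ} : Set ℝ)) ≤
      capac (strip N T₁ T₂) (gaussK d a) (A ×ˢ ({τ} : Set ℝ)) := by
    apply le_iSup_of_le μ'
    exact le_iSup_of_le ⟨hμ'reg, inferInstance, hcompl, hpot'⟩ le_rfl
  have hμ'F : μ' (A ×ˢ ({τ} : Set ℝ)) = (ENNReal.ofReal B)⁻¹ * volume A := by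
    rw [hμ', Measure.smul_apply, hμ, Measure.map_apply hf hFm, smul_eq_mul]
    congr 1
    have hpre : f ⁻¹' (A ×ˢ ({τ} : Set ℝ)) = A := by ext ξ; simp [hfdef]
    rw [hpre, hν, Measure.restrict_apply_self]
  calc volume A = ENNReal.ofReal B * ((ENNReal.ofReal B)⁻¹ * volume A) := by
        rw [← mul_assoc, ENNReal.mul_inv_cancel hB0 hBtop, one_mul]
    _ ≤ ENNReal.ofReal B *
        capac (strip N T₁ T₂) (gaussK d a) (A ×ˢ ({τ} : Set ℝ)) :=
      mul_le_mul_right (hμ'F ▸ hle) _
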